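/- Let f_12, f_13 ∈ 𝓕. Then for every d > 0 there exists a unique pair (d_12, d_13) of positive real numbers with d_12 + d_13 = d and f̃_12(d_12) = f̃_13(d_13). (In particular, for every f ∈ 𝓕 one has f̃(x) → −∞ as x → 0⁺.) -/

import Mathlib

open Set Filter Topology MeasureTheory Matrix Function

attribute [local instance] Classical.propDecidable

noncomputable section

/-- `f̃(d) = d * f(d)`. -/
def tildeFn (f : ℝ → ℝ) : ℝ → ℝ := fun d => d * f d

/-- Membership in the class `𝓕` of monotone interaction laws:
`f` is `C¹` on `ℝ₊ = (0,∞)`, `f̃′ > 0` on `ℝ₊`, `f̃` has a zero, and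
`∫_d^1 f̃(x) dx → −∞` as `d → 0⁺`. -/
def MemF (f : ℝ → ℝ) : Prop :=
  ContDiffOn ℝ 1 f (Set.Ioi 0) ∧
  (∀ d > (0:ℝ), 0 < deriv (tildeFn f) d) ∧
  (∃ d > (0:ℝ), tildeFn f d = 0) ∧
  Tendsto (fun d => ∫ x in d..(1:ℝ), tildeFn f x) (𝓝[>] (0:ℝ)) atBot

/-- The space `C¹(ℝ₊, ℝ)`. -/
def C1Pos : Type := {f : ℝ → ℝ // ContDiffOn ℝ 1 f (Set.Ioi 0)}

/-- The Whitney `C¹`-topology on `C¹(ℝ₊, ℝ)`, generated by the basic open sets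
`B_δ(f) = {g : |g(d) − f(d)| + |g′(d) − f′(d)| < δ(d) for all d > 0}`. -/
instance : TopologicalSpace C1Pos :=
  TopologicalSpace.generateFrom
    { S | ∃ (f : C1Pos) (δ : ℝ → ℝ), ContinuousOn δ (Set.Ioi 0) ∧ (∀ d > (0:ℝ), 0 < δ d) ∧
        S = { g : C1Pos | ∀ d > (0:ℝ), |g.1 d - f.1 d| + |deriv g.1 d - deriv f.1 d| < δ d } }

/-- The class `𝓕` as a topological space (subspace of `C¹(ℝ₊,ℝ)`). -/
def FF : Type := {f : C1Pos // MemF f.1}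

instance : TopologicalSpace FF := instTopologicalSpaceSubtype

/-- `G` is a triangulated Laman graph: there is a Henneberg-type construction order
(a relabeling `σ`) starting from the edge between the first two vertices, in which every
later vertex is joined to exactly two earlier, adjacent, vertices. -/
def IsTLG {N : ℕ} (G : SimpleGraph (Fin N)) : Prop :=
  2 ≤ N ∧
  ∃ (σ : Equiv.Perm (Fin N)) (par₁ par₂ : Fin N → Fin N),
    (∀ k : Fin N, 2 ≤ (k : ℕ) →
      ((par₁ k : ℕ) < (k : ℕ) ∧ (par₂ k : ℕ) < (k : ℕ) ∧ par₁ k ≠ par₂ k ∧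
        G.Adj (σ (par₁ k)) (σ (par₂ k)))) ∧
    (∀ i j : Fin N, G.Adj (σ i) (σ j) ↔
      (((i : ℕ) = 0 ∧ (j : ℕ) = 1) ∨ ((i : ℕ) = 1 ∧ (j : ℕ) = 0) ∨
       (2 ≤ (i : ℕ) ∧ (j = par₁ i ∨ j = par₂ i)) ∨
       (2 ≤ (j : ℕ) ∧ (i = par₁ j ∨ i = par₂ j))))

/-- Euclidean distance on `ℝ²` (coordinates `(a,b)`). -/
def dist2 (x y : ℝ × ℝ) : ℝ := Real.sqrt ((x.1 - y.1)^2 + (x.2 - y.2)^2)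

/-- `p` belongs to the configuration space `P`: no collision of adjacent agents. -/
def InConfigSpace {N : ℕ} (G : SimpleGraph (Fin N)) (p : Fin N → ℝ × ℝ) : Prop :=
  ∀ i j, G.Adj i j → p i ≠ p j

/-- `p` is an equilibrium of the RMA system `ẋᵢ = Σ_{j : (i,j) ∈ E} f_ij(d_ij)(x_j − x_i)`. -/
def IsEquilibrium {N : ℕ} (G : SimpleGraph (Fin N)) (f : Fin N → Fin N → ℝ → ℝ)
    (p : Fin N → ℝ × ℝ) : Prop :=
  ∀ i, (∑ j, if G.Adj i j then (f i j (dist2 (p i) (p j))) • (p j - p i) else (0:ℝ×ℝ)) = 0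

/-- The potential function `Φ(p) = Σ_{(i,j) ∈ E} ∫_1^{d_ij} x f_ij(x) dx`
(each edge counted once; the factor 1/2 compensates the double count over ordered pairs). -/
def potential {N : ℕ} (G : SimpleGraph (Fin N)) (f : Fin N → Fin N → ℝ → ℝ)
    (p : Fin N → ℝ × ℝ) : ℝ :=
  (1/2) * ∑ i, ∑ j, if G.Adj i j then ∫ x in (1:ℝ)..(dist2 (p i) (p j)), x * f i j x else 0

/-- Coordinate directions on the configuration space, in the order `(a₁,…,a_N,b₁,…,b_N)`. -/
def basisVec {N : ℕ} : (Fin N ⊕ Fin N) → (Fin N → ℝ × ℝ) :=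
  Sum.elim (fun i => Pi.single i ((1:ℝ), (0:ℝ))) (fun i => Pi.single i ((0:ℝ), (1:ℝ)))

/-- The Hessian matrix of `Φ` at `p` in the coordinates `(a₁,…,a_N,b₁,…,b_N)`. -/
def hessian {N : ℕ} (Φ : (Fin N → ℝ × ℝ) → ℝ) (p : Fin N → ℝ × ℝ) :
    Matrix (Fin N ⊕ Fin N) (Fin N ⊕ Fin N) ℝ :=
  Matrix.of fun u v => fderiv ℝ (fun q => fderiv ℝ Φ q (basisVec v)) p (basisVec u)

/-- The inertia `𝐧(M) = (n₊(M), n₀(M), n₋(M))` of a real symmetric matrix: the numbers of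
positive, zero, and negative eigenvalues (counted with multiplicity). -/
def inertia {m : Type*} [Fintype m] [DecidableEq m] (M : Matrix m m ℝ) : ℕ × ℕ × ℕ :=
  if h : M.IsHermitian then
    ((Finset.univ.filter fun i => 0 < h.eigenvalues i).card,
     (Finset.univ.filter fun i => h.eigenvalues i = 0).card,
     (Finset.univ.filter fun i => h.eigenvalues i < 0).card)
  else (0, 0, 0)

/-- The number `n₀(M)` of zero eigenvalues of a real symmetric matrix. -/
def n0 {m : Type*} [Fintype m] [DecidableEq m] (M : Matrix m m ℝ) : ℕ := (inertia M).2.1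

/-- The vector-valued sign function. -/
def sgn3 (x : ℝ) : ℕ × ℕ × ℕ :=
  if 0 < x then (1,0,0) else if x = 0 then (0,1,0) else (0,0,1)

/-- `q` lies in the `SE(2)`-orbit of `p` (rigid motions: rotation by `(c,s)` with
`c² + s² = 1` followed by translation by `(vx,vy)`). -/
def sameOrbit {N : ℕ} (p q : Fin N → ℝ × ℝ) : Prop :=
  ∃ c s vx vy : ℝ, c^2 + s^2 = 1 ∧
    ∀ i, q i = (c * (p i).1 - s * (p i).2 + vx, s * (p i).1 + c * (p i).2 + vy)

/-- The interaction laws determined by an ensemble `ω ∈ 𝓕^{|E|}`. -/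
def ensembleLaws {N : ℕ} {G : SimpleGraph (Fin N)} (ω : G.edgeSet → FF) :
    Fin N → Fin N → ℝ → ℝ :=
  fun i j => if h : G.Adj i j then (ω ⟨s(i,j), G.mem_edgeSet.mpr h⟩).1.1 else 0

/-- The line configuration on the `a`-axis with coordinates `a`. -/
def lineConfig {N : ℕ} (a : Fin N → ℝ) : Fin N → ℝ × ℝ := fun i => (a i, 0)

/-- The matrix `F_p` of a line configuration with coordinates `a`: symmetric, zero row sums,
off-diagonal entries `φ_ij(d_ij)` on edges and `0` otherwise. -/
def FMat {N : ℕ} (G : SimpleGraph (Fin N)) (φ : Fin N → Fin N → ℝ → ℝ)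
    (a : Fin N → ℝ) : Matrix (Fin N) (Fin N) ℝ :=
  Matrix.of fun i j =>
    if i = j then -∑ k, (if G.Adj i k then φ i k |a i - a k| else 0)
    else if G.Adj i j then φ i j |a i - a j| else 0

/-- The matrix `d̃F_p`: off-diagonal entries `f̃′_ij(d_ij)` on edges. -/
def dFMat {N : ℕ} (G : SimpleGraph (Fin N)) (f : Fin N → Fin N → ℝ → ℝ)
    (a : Fin N → ℝ) : Matrix (Fin N) (Fin N) ℝ :=
  FMat G (fun i j d => deriv (tildeFn (f i j)) d) a

/-- Case 1 balanced distance: the (generically unique) `d₁₂(d)` with `0 < d₁₂ < d` and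
`f̃₁₂(d₁₂) = f̃₁₃(d − d₁₂)`. -/
def case1d12 (f12 f13 : ℝ → ℝ) (d : ℝ) : ℝ :=
  Classical.epsilon fun t => 0 < t ∧ t < d ∧ tildeFn f12 t = tildeFn f13 (d - t)

/-- The case-1 virtual interaction: `g̃₂₃(d) = f̃₁₂(d₁₂(d))`. -/
def g23Case1 (f12 f13 : ℝ → ℝ) : ℝ → ℝ :=
  fun d => tildeFn f12 (case1d12 f12 f13 d) / d

/-- Case 2 balanced distance: the (generically unique) `d₁₂(d) > 0` with
`f̃₁₂(d₁₂) + f̃₁₃(d₁₂ + d) = 0`. -/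
def case2d12 (f12 f13 : ℝ → ℝ) (d : ℝ) : ℝ :=
  Classical.epsilon fun t => 0 < t ∧ tildeFn f12 t + tildeFn f13 (t + d) = 0

/-- The case-2 virtual interaction: `g̃₂₃(d) = f̃₁₃(d₁₃(d))`, `d₁₃(d) = d₁₂(d) + d`. -/
def g23Case2 (f12 f13 : ℝ → ℝ) : ℝ → ℝ :=
  fun d => tildeFn f13 (case2d12 f12 f13 d + d) / d

/-- The case-3 virtual interaction: case 2 with the roles of agents 2,3 (and `f₁₂`,`f₁₃`)
interchanged. -/
def g23Case3 (f12 f13 : ℝ → ℝ) : ℝ → ℝ := g23Case2 f13 f12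

/-- The virtual interaction between agents 2 and 3 induced by `f₁₂`, `f₁₃`, chosen according
to which of the three aligned agents (at coordinates `a1`, `a2`, `a3`) lies between the
other two. -/
def virtualG (f12 f13 : ℝ → ℝ) (a1 a2 a3 : ℝ) : ℝ → ℝ :=
  if (a2 < a1 ∧ a1 < a3) ∨ (a3 < a1 ∧ a1 < a2) then g23Case1 f12 f13
  else if (a1 < a2 ∧ a2 < a3) ∨ (a3 < a2 ∧ a2 < a1) then g23Case2 f12 f13
  else g23Case3 f12 f13

/-- The interaction laws of the reduced system: vertex `0` (the last Henneberg vertex,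
the paper's vertex 1) is deleted, reduced vertex `i` is original vertex `i+1`, and the law on
the reduced edge `(0,1)` (the paper's edge `(2,3)`) is `f*₂₃ = f₂₃ + g₂₃`. -/
def reducedLaws {n : ℕ} (f : Fin (n+3) → Fin (n+3) → ℝ → ℝ) (g : ℝ → ℝ) :
    Fin (n+2) → Fin (n+2) → ℝ → ℝ :=
  fun i j => if (i = 0 ∧ j = 1) ∨ (i = 1 ∧ j = 0)
    then fun d => f i.succ j.succ d + g d
    else f i.succ j.succ

end

lemma tilde_contOn {f : ℝ → ℝ} (hf : ContDiffOn ℝ 1 f (Set.Ioi 0)) :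
    ContinuousOn (tildeFn f) (Set.Ioi 0) :=
  continuousOn_id.mul hf.continuousOn

lemma tilde_smono {f : ℝ → ℝ} (hf : MemF f) : StrictMonoOn (tildeFn f) (Set.Ioi 0) := by
  apply strictMonoOn_of_deriv_pos (convex_Ioi 0) (tilde_contOn hf.1)
  intro x hx
  rw [interior_Ioi] at hx
  exact hf.2.1 x hx

lemma tilde_tendsto_atBot {f : ℝ → ℝ} (hf : MemF f) :
    Tendsto (tildeFn f) (𝓝[>] (0:ℝ)) atBot := by
  have key : ∀ M : ℝ, ∃ x > (0:ℝ), tildeFn f x ≤ M := by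
    by_contra hcon
    push_neg at hcon
    obtain ⟨M, hM⟩ := hcon
    have hlb : ∀ d ∈ Set.Ioo (0:ℝ) 1, -|M| ≤ ∫ x in d..(1:ℝ), tildeFn f x := by
      intro d hd
      have hsub : Set.uIcc d 1 ⊆ Set.Ioi 0 := by
        rw [Set.uIcc_of_le hd.2.le]
        intro x hx
        exact lt_of_lt_of_le hd.1 hx.1
      have hint : IntervalIntegrable (tildeFn f) MeasureTheory.volume d 1 :=
        ((tilde_contOn hf.1).mono hsub).intervalIntegrable
      have hmono : ∫ x in d..(1:ℝ), M ≤ ∫ x in d..(1:ℝ), tildeFn f x := by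
        apply intervalIntegral.integral_mono_on hd.2.le intervalIntegrable_const hint
        intro x hx
        exact (hM x (lt_of_lt_of_le hd.1 hx.1)).le
      rw [intervalIntegral.integral_const, smul_eq_mul] at hmono
      nlinarith [abs_nonneg M, le_abs_self M, neg_abs_le M, hd.1, hd.2]
    have h1 := hf.2.2.2.eventually (eventually_le_atBot (-|M| - 1))
    have h2 : Set.Ioo (0:ℝ) 1 ∈ 𝓝[>] (0:ℝ) := Ioo_mem_nhdsGT_of_mem ⟨le_refl 0, one_pos⟩
    obtain ⟨d, hd1, hd2⟩ := (h1.and (eventually_of_mem h2 fun x hx => hx)).exists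
    linarith [hlb d hd2]
  rw [tendsto_atBot]
  intro b
  obtain ⟨x, hx, hxb⟩ := key b
  filter_upwards [Ioo_mem_nhdsGT_of_mem (Set.left_mem_Ico.mpr hx)] with y hy
  exact le_trans ((tilde_smono hf).monotoneOn hy.1 hx hy.2.le) hxb

/-- for `f₁₂, f₁₃ ∈ 𝓕` and every `d > 0` there is a unique pair
`(d₁₂, d₁₃)` of positive reals with `d₁₂ + d₁₃ = d` and `f̃₁₂(d₁₂) = f̃₁₃(d₁₃)`;
in particular every `f ∈ 𝓕` satisfies `f̃(x) → −∞` as `x → 0⁺`. -/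
theorem statement6 (f12 f13 : ℝ → ℝ) (h12 : MemF f12) (h13 : MemF f13) :
    (∀ d > (0:ℝ), ∃! q : ℝ × ℝ, 0 < q.1 ∧ 0 < q.2 ∧ q.1 + q.2 = d ∧
        tildeFn f12 q.1 = tildeFn f13 q.2) ∧
    (∀ f : ℝ → ℝ, MemF f → Tendsto (tildeFn f) (𝓝[>] (0:ℝ)) atBot) := by
  refine ⟨?_, fun f hf => tilde_tendsto_atBot hf⟩
  intro d hd
  have hm12 := tilde_smono h12
  have hm13 := tilde_smono h13
  have hd2 : (0:ℝ) < d/2 := by linarith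
  obtain ⟨t₁, ht₁m, ht₁v⟩ : ∃ t, t ∈ Set.Ioo 0 (d/2) ∧ tildeFn f12 t < tildeFn f13 (d/2) := by
    have h1 := (tilde_tendsto_atBot h12).eventually (eventually_lt_atBot (tildeFn f13 (d/2)))
    have h2 : Set.Ioo (0:ℝ) (d/2) ∈ 𝓝[>] (0:ℝ) := Ioo_mem_nhdsGT_of_mem ⟨le_refl 0, hd2⟩
    obtain ⟨t, ht, ht'⟩ := ((eventually_of_mem h2 fun x hx => hx).and h1).exists
    exact ⟨t, ht, ht'⟩
  obtain ⟨s, hsm, hsv⟩ : ∃ t, t ∈ Set.Ioo 0 (d/2) ∧ tildeFn f13 t < tildeFn f12 (d/2) := by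
    have h1 := (tilde_tendsto_atBot h13).eventually (eventually_lt_atBot (tildeFn f12 (d/2)))
    have h2 : Set.Ioo (0:ℝ) (d/2) ∈ 𝓝[>] (0:ℝ) := Ioo_mem_nhdsGT_of_mem ⟨le_refl 0, hd2⟩
    obtain ⟨t, ht, ht'⟩ := ((eventually_of_mem h2 fun x hx => hx).and h1).exists
    exact ⟨t, ht, ht'⟩
  set t₂ := d - s with ht₂def
  have ht₁t₂ : t₁ ≤ t₂ := by
    have := ht₁m.2; have := hsm.2; simp only [ht₂def]; linarith
  set h : ℝ → ℝ := fun t => tildeFn f12 t - tildeFn f13 (d - t) with hdef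
  have hsub : Set.Icc t₁ t₂ ⊆ Set.Ioi 0 := fun x hx => lt_of_lt_of_le ht₁m.1 hx.1
  have hch : ContinuousOn h (Set.Icc t₁ t₂) := by
    apply ((tilde_contOn h12.1).mono hsub).sub
    apply (tilde_contOn h13.1).comp (continuousOn_const.sub continuousOn_id)
    intro x hx
    have hxle : x ≤ d - s := ht₂def ▸ hx.2
    simp only [Set.mem_Ioi, Pi.sub_apply, id_eq]
    linarith [hsm.1]
  have hht₁ : h t₁ < 0 := by
    have hle : tildeFn f13 (d/2) ≤ tildeFn f13 (d - t₁) := by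
      apply hm13.monotoneOn (Set.mem_Ioi.mpr hd2)
      · simp only [Set.mem_Ioi]; linarith [ht₁m.2]
      · linarith [ht₁m.2]
    simp only [hdef]; linarith
  have hht₂ : 0 < h t₂ := by
    have hle : tildeFn f12 (d/2) ≤ tildeFn f12 (d - s) := by
      apply hm12.monotoneOn (Set.mem_Ioi.mpr hd2)
      · simp only [Set.mem_Ioi]; linarith [hsm.2]
      · linarith [hsm.2]
    have hds : d - t₂ = s := by simp only [ht₂def]; ring
    simp only [hdef, ht₂def]
    rw [show d - (d - s) = s by ring]
    linarith
  obtain ⟨c, hcm, hc0⟩ := intermediate_value_Icc ht₁t₂ hch ⟨hht₁.le, hht₂.le⟩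
  have hc0' : tildeFn f12 c = tildeFn f13 (d - c) := sub_eq_zero.mp hc0
  have hcpos : 0 < c := lt_of_lt_of_le ht₁m.1 hcm.1
  have hcd : c < d := by
    have := hcm.2; simp only [ht₂def] at this; linarith [hsm.1]
  refine ⟨(c, d - c), ⟨hcpos, by simpa using hcd, by ring, hc0'⟩, ?_⟩
  rintro ⟨a, b⟩ ⟨ha, hb, hab, hfab⟩
  simp only at ha hb hab hfab ⊢
  have hb' : b = d - a := by linarith
  have hac : a = c := by
    rcases lt_trichotomy a c with hlt | heq | hgt
    · exfalso
      have h1 : tildeFn f12 a < tildeFn f12 c := hm12 (Set.mem_Ioi.mpr ha) (Set.mem_Ioi.mpr hcpos) hlt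
      have h2 : tildeFn f13 (d - c) < tildeFn f13 b := by
        apply hm13 (Set.mem_Ioi.mpr (by linarith)) (Set.mem_Ioi.mpr (by linarith))
        linarith
      rw [hb'] at hfab
      rw [hb'] at h2
      linarith
    · exact heq
    · exfalso
      have h1 : tildeFn f12 c < tildeFn f12 a := hm12 (Set.mem_Ioi.mpr hcpos) (Set.mem_Ioi.mpr ha) hgt
      have h2 : tildeFn f13 b < tildeFn f13 (d - c) := by
        rw [hb']
        apply hm13 (Set.mem_Ioi.mpr (by linarith)) (Set.mem_Ioi.mpr (by linarith))
        linarith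
      linarith
  exact Prod.ext hac (by rw [hb', hac])
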